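/- Let γ_1, …, γ_m ∈ ℝ^{m−n}, and for φ ∈ ℝ^{m−n} let T_φ : ℂ^m → ℂ^m be the map (T_φ z)_k = e^{2πi⟨γ_k,φ⟩} z_k. Let f : ℂ^m → ℝ be continuously differentiable, and let X : ℂ^m → ℂ^m be a continuous vector field such that (1) X is Hamiltonian with Hamiltonian function f, i.e. for all z, w ∈ ℂ^m the real Fréchet derivative of f at z applied to w equals ω(X(z), w), where ω(x, y) = 2 Σ_k Im(x_k conj(y_k)); and (2) X is T_Γ-equivariant: X(T_φ z) = T_φ(X(z)) for all φ ∈ ℝ^{m−n} and z ∈ ℂ^m. Then the moment map μ_Γ(z) = Σ_k |z_k|² γ_k is constant along X: for every z ∈ ℂ^m, the real Fréchet derivative of μ_Γ at z applied to X(z) is zero. -/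

import Mathlib

open Complex Finset

/-- Derivative of `Complex.normSq`. -/
lemma hasFDerivAt_normSq' (x : ℂ) :
    HasFDerivAt (fun w : ℂ => Complex.normSq w)
      ((2 * x.re) • Complex.reCLM + (2 * x.im) • Complex.imCLM) x := by
  have h : (fun w : ℂ => Complex.normSq w)
      = fun w : ℂ => Complex.reCLM w * Complex.reCLM w + Complex.imCLM w * Complex.imCLM w := by
    funext w; simp [Complex.normSq_apply]
  rw [h]
  have h1 := (Complex.reCLM.hasFDerivAt (x := x)).mul (Complex.reCLM.hasFDerivAt (x := x))
  have h2 := (Complex.imCLM.hasFDerivAt (x := x)).mul (Complex.imCLM.hasFDerivAt (x := x))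
  refine (h1.add h2).congr_fderiv ?_
  ext w
  simp [Complex.reCLM_apply, Complex.imCLM_apply]
  ring

/-- Noether's theorem for the torus `T_Γ` acting coordinatewise on `ℂᵐ`: if `X` is a continuous
`T_Γ`-equivariant vector field which is Hamiltonian with `C¹` Hamiltonian function `f`
(with respect to `ω(x,y) = 2∑ₖ Im(xₖ conj yₖ)`), then the moment map
`μ_Γ(z) = ∑ₖ |z_k|² γ_k` is constant along `X`. -/
theorem stmt_12 (m n : ℕ) (γ : Fin m → Fin (m - n) → ℝ)
    (f : (Fin m → ℂ) → ℝ) (hf : ContDiff ℝ 1 f)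
    (X : (Fin m → ℂ) → Fin m → ℂ) (hXc : Continuous X)
    (hHam : ∀ z w : Fin m → ℂ,
      fderiv ℝ f z w = 2 * ∑ k, (X z k * (starRingEnd ℂ) (w k)).im)
    (hEquiv : ∀ (φ : Fin (m - n) → ℝ) (z : Fin m → ℂ),
      X (fun k =>
          Complex.exp (((2 * Real.pi * ∑ j, γ k j * φ j : ℝ) : ℂ) * Complex.I) * z k) =
        fun k =>
          Complex.exp (((2 * Real.pi * ∑ j, γ k j * φ j : ℝ) : ℂ) * Complex.I) * X z k) :
    ∀ z : Fin m → ℂ,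
      fderiv ℝ (fun z : Fin m → ℂ => ∑ k, Complex.normSq (z k) • γ k) z (X z) = 0 := by
  intro z
  set r : Fin m → ℝ := fun k => (X z k * (starRingEnd ℂ) (z k)).re with hr
  -- Key claim: for every φ, ∑ₖ ⟨γₖ, φ⟩ rₖ = 0
  have key : ∀ φ : Fin (m - n) → ℝ, ∑ k, (∑ j, γ k j * φ j) * r k = 0 := by
    intro φ
    set c : Fin m → ℝ := fun k => 2 * Real.pi * ∑ j, γ k j * φ j with hc
    -- the flow line
    set h : ℝ → Fin m → ℂ := fun t k => Complex.exp (((c k * t : ℝ) : ℂ) * Complex.I) * z k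
      with hh
    set C : ℝ := 2 * ∑ k, (-(c k) * r k) with hC
    -- derivative of h
    have hhd : ∀ t : ℝ, HasDerivAt h
        (fun k => ((c k : ℂ) * Complex.I) * Complex.exp (((c k * t : ℝ) : ℂ) * Complex.I) * z k)
        t := by
      intro t
      rw [hasDerivAt_pi]
      intro k
      have h1 : HasDerivAt (fun t : ℝ => ((c k * t : ℝ) : ℂ) * Complex.I)
          ((c k : ℂ) * Complex.I) t := by
        have : (fun t : ℝ => ((c k * t : ℝ) : ℂ) * Complex.I)
            = fun t : ℝ => ((c k : ℂ) * Complex.ofRealCLM t) * Complex.I := by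
          funext t; simp only [Complex.ofRealCLM_apply]; push_cast; ring
        rw [this]
        simpa using ((Complex.ofRealCLM.hasDerivAt (x := t)).const_mul
          ((c k : ℂ))).mul_const Complex.I
      have h2 := (h1.cexp).mul_const (z k)
      exact h2.congr_deriv (by ring)
    -- derivative of f ∘ h is the constant C
    have hfd := hf.differentiable one_ne_zero
    have hgd : ∀ t : ℝ, HasDerivAt (fun t => f (h t)) C t := by
      intro t
      have := (hfd (h t)).hasFDerivAt.comp_hasDerivAt t (hhd t)
      refine this.congr_deriv (Eq.symm ?_)
      rw [hHam]
      have hXt : X (h t) = fun k =>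
          Complex.exp (((c k * t : ℝ) : ℂ) * Complex.I) * X z k := by
        have := hEquiv (t • φ) z
        have harg : ∀ k, (2 * Real.pi * ∑ j, γ k j * (t • φ) j : ℝ) = c k * t := by
          intro k
          simp only [Pi.smul_apply, smul_eq_mul, hc]
          rw [Finset.mul_sum, Finset.mul_sum, Finset.sum_mul]
          congr 1; funext j; ring
        simp only [harg] at this
        rw [hh]
        exact this
      rw [hXt, hC]
      congr 1
      apply Finset.sum_congr rfl
      intro k _
      set E : ℂ := Complex.exp (((c k * t : ℝ) : ℂ) * Complex.I) with hE
      have e1 : E * X z k * (starRingEnd ℂ) ((c k : ℂ) * Complex.I * E * z k)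
          = (E * (starRingEnd ℂ) E) *
              ((c k : ℂ) * ((X z k * (starRingEnd ℂ) (z k)) * (-Complex.I))) := by
        simp only [map_mul, Complex.conj_ofReal, Complex.conj_I]
        ring
      rw [e1, Complex.mul_conj, hE, Complex.normSq_eq_norm_sq, Complex.norm_exp_ofReal_mul_I]
      simp [Complex.mul_im, Complex.mul_re, hr]
    -- f ∘ h is affine with slope C
    have haff : ∀ t : ℝ, f (h t) = f (h 0) + C * t := by
      intro t
      have hdiff : Differentiable ℝ (fun t => f (h t) - C * t) := fun s =>
        (((hgd s).sub ((hasDerivAt_id s).const_mul C)).differentiableAt)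
      have hder : ∀ s : ℝ, deriv (fun t => f (h t) - C * t) s = 0 := by
        intro s
        have := ((hgd s).sub ((hasDerivAt_id s).const_mul C)).deriv
        rw [show (fun t => f (h t) - C * t) = (fun t => f (h t)) - fun y => C * y from rfl]
        simpa using this
      have := is_const_of_deriv_eq_zero hdiff hder t 0
      simp only [mul_zero, sub_zero] at this
      linarith [this]
    -- f ∘ h is bounded, since h stays in a compact torus
    set K : Set (Fin m → ℂ) := {w | ∀ k, ‖w k‖ = ‖z k‖} with hK
    have hKc : IsClosed K := by
      have : K = ⋂ k, {w : Fin m → ℂ | ‖w k‖ = ‖z k‖} := by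
        ext w; simp [hK]
      rw [this]
      exact isClosed_iInter fun k =>
        isClosed_eq (continuous_norm.comp (continuous_apply k)) continuous_const
    have hKsub : K ⊆ Metric.closedBall 0 ‖z‖ := by
      intro w hw
      rw [Metric.mem_closedBall, dist_zero_right]
      rw [pi_norm_le_iff_of_nonneg (norm_nonneg z)]
      intro k
      have : ‖w k‖ = ‖z k‖ := hw k
      rw [this]
      exact norm_le_pi_norm z k
    have hKcomp : IsCompact K :=
      (isCompact_closedBall (0 : Fin m → ℂ) ‖z‖).of_isClosed_subset hKc hKsub
    obtain ⟨B, hB⟩ := hKcomp.exists_bound_of_continuousOn hf.continuous.continuousOn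
    have hmem : ∀ t : ℝ, h t ∈ K := by
      intro t k
      simp only [hh, norm_mul, Complex.norm_exp_ofReal_mul_I, one_mul]
    -- boundedness forces C = 0
    have hC0 : C = 0 := by
      by_contra hne
      set t : ℝ := (2 * B + 1) / |C| with ht
      have habs : |C| > 0 := abs_pos.mpr hne
      have h1 : |C * t| = 2 * B + 1 := by
        have hB0 : (0:ℝ) ≤ B := le_trans (norm_nonneg _) (hB (h 0) (hmem 0))
        rw [abs_mul, ht, abs_div, _root_.abs_abs,
          _root_.abs_of_nonneg (by linarith : (0:ℝ) ≤ 2 * B + 1)]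
        field_simp
      have h2 : |C * t| ≤ 2 * B := by
        have := haff t
        have e : C * t = f (h t) - f (h 0) := by linarith
        rw [e]
        calc |f (h t) - f (h 0)| ≤ |f (h t)| + |f (h 0)| := abs_sub _ _
          _ ≤ B + B := add_le_add (hB _ (hmem t)) (hB _ (hmem 0))
          _ = 2 * B := by ring
      linarith
    -- unpack C = 0
    have : ∑ k, (c k * r k) = 0 := by
      have : (2:ℝ) * ∑ k, (-(c k) * r k) = 0 := hC0 ▸ hC.symm
      have h2 : ∑ k, (-(c k) * r k) = -∑ k, (c k * r k) := by
        rw [← Finset.sum_neg_distrib]; congr 1; funext k; ring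
      rw [h2] at this; linarith
    have hsum : 2 * Real.pi * ∑ k, (∑ j, γ k j * φ j) * r k = 0 := by
      rw [Finset.mul_sum]
      rw [← this]
      apply Finset.sum_congr rfl
      intro k _
      rw [hc]; ring
    have hpi : (2 * Real.pi : ℝ) ≠ 0 := by positivity
    exact (mul_eq_zero.mp hsum).resolve_left hpi
  -- specialize to φ = eⱼ
  have key' : ∀ j : Fin (m - n), ∑ k, γ k j * r k = 0 := by
    intro j
    have := key (Pi.single j 1)
    simpa [Pi.single_apply, mul_ite, Finset.sum_ite_eq'] using this
  -- compute the derivative of the moment map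
  have hμ : HasFDerivAt (fun z : Fin m → ℂ => ∑ k, Complex.normSq (z k) • γ k)
      (∑ k, ((((2 * (z k).re) • Complex.reCLM + (2 * (z k).im) • Complex.imCLM).comp
        (ContinuousLinearMap.proj k : (Fin m → ℂ) →L[ℝ] ℂ)).smulRight (γ k))) z := by
    apply HasFDerivAt.fun_sum
    intro k _
    exact ((hasFDerivAt_normSq' (z k)).comp z
      ((ContinuousLinearMap.proj k : (Fin m → ℂ) →L[ℝ] ℂ).hasFDerivAt)).smul_const (γ k)
  rw [hμ.fderiv]
  funext j
  simp only [ContinuousLinearMap.sum_apply, ContinuousLinearMap.smulRight_apply,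
    ContinuousLinearMap.comp_apply, ContinuousLinearMap.proj_apply,
    ContinuousLinearMap.add_apply, ContinuousLinearMap.smul_apply,
    Complex.reCLM_apply, Complex.imCLM_apply, smul_eq_mul, Finset.sum_apply,
    Pi.smul_apply, Pi.zero_apply]
  have : ∀ k : Fin m, (2 * (z k).re * (X z k).re + 2 * (z k).im * (X z k).im) * γ k j
      = 2 * (γ k j * r k) := by
    intro k
    rw [hr]
    simp only [Complex.mul_re, Complex.conj_re, Complex.conj_im]
    ring
  calc ∑ k, (2 * (z k).re * (X z k).re + 2 * (z k).im * (X z k).im) * γ k j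
      = ∑ k, 2 * (γ k j * r k) := Finset.sum_congr rfl fun k _ => this k
    _ = 2 * ∑ k, γ k j * r k := by rw [Finset.mul_sum]
    _ = 0 := by rw [key' j, mul_zero]
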